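/- arXiv:2004.00711 — 6 statements merged into one kernel-verified Lean document; each statement's English description precedes it below -/
import Mathlib

section
/- Let y : ℝ → ℝ be continuously differentiable on [0, 1] with y(0) = 0, y(1) = 1, y(x) ≥ 0 and y′(x) ≥ 0 for all x in [0, 1]. Then ∫_0^1 y(x)·(y′(x))³ dx ≥ 27/64. -/
open Real intervalIntegral

/-- Minimum drag problem lower bound: any nonnegative nondecreasing C¹
competitor with `y(0) = 0` and `y(1) = 1` satisfies `∫ y y′³ ≥ 27/64`. -/
theorem minimum_drag_lower_bound
    (y : ℝ → ℝ) (hy : ContDiffOn ℝ 1 y (Set.Icc 0 1))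
    (h0 : y 0 = 0) (h1 : y 1 = 1)
    (hpos : ∀ x ∈ Set.Icc (0 : ℝ) 1, 0 ≤ y x)
    (hmono : ∀ x ∈ Set.Icc (0 : ℝ) 1, 0 ≤ deriv y x) :
    ∫ x in (0 : ℝ)..1, y x * (deriv y x) ^ 3 ≥ 27 / 64 := by
  set g : ℝ → ℝ := derivWithin y (Set.Icc 0 1) with hg_def
  have hycont : ContinuousOn y (Set.Icc 0 1) := hy.continuousOn
  have hg_cont : ContinuousOn g (Set.Icc 0 1) :=
    hy.continuousOn_derivWithin (uniqueDiffOn_Icc zero_lt_one) le_rfl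
  -- at interior points, g x = deriv y x and y has derivative g x
  have hderiv : ∀ x ∈ Set.Ioo (0:ℝ) 1, HasDerivAt y (g x) x := by
    intro x hx
    have hnhds : Set.Icc (0:ℝ) 1 ∈ nhds x := Icc_mem_nhds hx.1 hx.2
    have hdiff : DifferentiableAt ℝ y x :=
      ((hy.differentiableOn one_ne_zero) x (Set.Ioo_subset_Icc_self hx)).differentiableAt hnhds
    have : g x = deriv y x := derivWithin_of_mem_nhds hnhds
    rw [this]
    exact hdiff.hasDerivAt
  have hgeq : ∀ x ∈ Set.Ioo (0:ℝ) 1, g x = deriv y x := by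
    intro x hx
    exact derivWithin_of_mem_nhds (Icc_mem_nhds hx.1 hx.2)
  -- h = u' where u = y^(4/3)
  set h : ℝ → ℝ := fun x => 4/3 * (y x) ^ ((1:ℝ)/3) * g x with hh_def
  have hh_cont : ContinuousOn h (Set.Icc 0 1) := by
    apply ContinuousOn.mul _ hg_cont
    exact continuousOn_const.mul (hycont.rpow_const (fun x _ => Or.inr (by norm_num)))
  set u : ℝ → ℝ := fun x => (y x) ^ ((4:ℝ)/3) with hu_def
  have hu_cont : ContinuousOn u (Set.Icc 0 1) :=
    hycont.rpow_const (fun x _ => Or.inr (by norm_num))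
  have hu_deriv : ∀ x ∈ Set.Ioo (0:ℝ) 1, HasDerivWithinAt u (h x) (Set.Ioi x) x := by
    intro x hx
    have hr : HasDerivAt (fun t : ℝ => t ^ ((4:ℝ)/3))
        ((4/3) * (y x) ^ ((4:ℝ)/3 - 1)) (y x) :=
      Real.hasDerivAt_rpow_const (Or.inr (by norm_num))
    have := hr.comp x (hderiv x hx)
    have heq : (4/3) * (y x) ^ ((4:ℝ)/3 - 1) * g x = h x := by
      norm_num [hh_def]
    rw [heq] at this
    exact this.hasDerivWithinAt
  have hIcc : Set.uIcc (0:ℝ) 1 = Set.Icc 0 1 := Set.uIcc_of_le zero_le_one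
  have hint_h : IntervalIntegrable h MeasureTheory.volume 0 1 := by
    apply ContinuousOn.intervalIntegrable; rwa [hIcc]
  -- FTC : ∫ h = u 1 - u 0 = 1
  have hFTC : ∫ x in (0:ℝ)..1, h x = 1 := by
    rw [intervalIntegral.integral_eq_sub_of_hasDeriv_right_of_le zero_le_one hu_cont
      hu_deriv hint_h]
    simp [hu_def, h0, h1, Real.zero_rpow (by norm_num : (4:ℝ)/3 ≠ 0)]
  -- integrands
  have hint_h3 : IntervalIntegrable (fun x => h x ^ 3) MeasureTheory.volume 0 1 := by
    apply ContinuousOn.intervalIntegrable; rw [hIcc]; exact hh_cont.pow 3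
  have hint_lin : IntervalIntegrable (fun x => 3 * h x - 2) MeasureTheory.volume 0 1 := by
    apply ContinuousOn.intervalIntegrable; rw [hIcc]
    exact (continuousOn_const.mul hh_cont).sub continuousOn_const
  -- a.e. facts
  have hae0 : ∀ᵐ x : ℝ, x ≠ (0:ℝ) := by
    rw [MeasureTheory.ae_iff]
    have hset : {x : ℝ | ¬ x ≠ 0} = {0} := by ext t; simp
    rw [hset]; exact MeasureTheory.measure_singleton 0
  have hae1 : ∀ᵐ x : ℝ, x ≠ (1:ℝ) := by
    rw [MeasureTheory.ae_iff]
    have hset : {x : ℝ | ¬ x ≠ 1} = {1} := by ext t; simp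
    rw [hset]; exact MeasureTheory.measure_singleton 1
  -- Jensen-type : ∫ h^3 ≥ 1
  have hmono' : ∀ x ∈ Set.Ioo (0:ℝ) 1, 0 ≤ h x := by
    intro x hx
    have hg0 : 0 ≤ g x := by rw [hgeq x hx]; exact hmono x (Set.Ioo_subset_Icc_self hx)
    have hy0 : 0 ≤ y x := hpos x (Set.Ioo_subset_Icc_self hx)
    have : (0:ℝ) ≤ (y x) ^ ((1:ℝ)/3) := Real.rpow_nonneg hy0 _
    positivity
  have hptwise : ∀ᵐ x ∂(MeasureTheory.volume.restrict (Set.Icc (0:ℝ) 1)),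
      3 * h x - 2 ≤ h x ^ 3 := by
    have hmem : ∀ᵐ x ∂(MeasureTheory.volume.restrict (Set.Icc (0:ℝ) 1)), x ∈ Set.Icc (0:ℝ) 1 :=
      MeasureTheory.ae_restrict_mem measurableSet_Icc
    filter_upwards [hmem, hae0.filter_mono (MeasureTheory.ae_mono MeasureTheory.Measure.restrict_le_self),
      hae1.filter_mono (MeasureTheory.ae_mono MeasureTheory.Measure.restrict_le_self)]
      with x hx hx0 hx1
    have hxIoo : x ∈ Set.Ioo (0:ℝ) 1 := ⟨lt_of_le_of_ne hx.1 (Ne.symm hx0), lt_of_le_of_ne hx.2 hx1⟩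
    have := hmono' x hxIoo
    nlinarith [sq_nonneg (h x - 1)]
  have hJensen : (1:ℝ) ≤ ∫ x in (0:ℝ)..1, h x ^ 3 := by
    have := intervalIntegral.integral_mono_ae_restrict zero_le_one hint_lin hint_h3 hptwise
    have hlin : ∫ x in (0:ℝ)..1, (3 * h x - 2) = 1 := by
      rw [intervalIntegral.integral_sub ((hint_h.const_mul 3)) intervalIntegrable_const,
        intervalIntegral.integral_const_mul, hFTC]
      norm_num
    linarith
  -- rewrite the original integrand
  have hcongr1 : ∫ x in (0:ℝ)..1, y x * (deriv y x) ^ 3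
      = ∫ x in (0:ℝ)..1, y x * (g x) ^ 3 := by
    apply intervalIntegral.integral_congr_ae
    filter_upwards [hae1] with x hx1 hx
    rw [Set.uIoc_of_le zero_le_one] at hx
    have hxIoo : x ∈ Set.Ioo (0:ℝ) 1 := ⟨hx.1, lt_of_le_of_ne hx.2 hx1⟩
    rw [hgeq x hxIoo]
  have hcongr2 : ∫ x in (0:ℝ)..1, y x * (g x) ^ 3
      = ∫ x in (0:ℝ)..1, 27/64 * (h x ^ 3) := by
    apply intervalIntegral.integral_congr
    intro x hx
    rw [hIcc] at hx
    have hy0 : 0 ≤ y x := hpos x hx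
    have hcube : ((y x) ^ ((1:ℝ)/3)) ^ 3 = y x := by
      rw [← Real.rpow_natCast ((y x) ^ ((1:ℝ)/3)) 3, ← Real.rpow_mul hy0]
      norm_num
    have hexp : h x ^ 3 = (4/3)^3 * ((y x ^ ((1:ℝ)/3)) ^ 3) * g x ^ 3 := by
      simp only [hh_def]; ring
    show y x * g x ^ 3 = 27/64 * h x ^ 3
    rw [hexp, hcube]; ring
  rw [hcongr1, hcongr2, intervalIntegral.integral_const_mul]
  nlinarith [hJensen]
end

section
/- Let y₀(x) = cos(x + π/2) + (2/π)·x and let h : ℝ → ℝ be continuously differentiable on [−π/2, π/2] with h(−π/2) = h(π/2) = 0. Then ∫_{−π/2}^{π/2} (((y₀ + h)′(x))² − 2·(y₀ + h)(x)·cos(x + π/2)) dx − ∫_{−π/2}^{π/2} ((y₀′(x))² − 2·y₀(x)·cos(x + π/2)) dx = ∫_{−π/2}^{π/2} (h′(x))² dx. -/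
open Real intervalIntegral

noncomputable def f0 : ℝ → ℝ := fun x : ℝ => Real.cos (x + π / 2) + (2 / π) * x
noncomputable def f0' : ℝ → ℝ := fun x : ℝ => -Real.sin (x + π / 2) + 2 / π

lemma hf0 (x : ℝ) : HasDerivAt f0 (f0' x) x := by
  have h1 : HasDerivAt (fun x : ℝ => x + π / 2) 1 x := (hasDerivAt_id x).add_const _
  have h3 : HasDerivAt (fun x : ℝ => (2 / π) * x) (2 / π) x := by
    simpa using (hasDerivAt_id x).const_mul (2 / π)
  exact (h1.cos.add h3).congr_deriv (by simp [f0'])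

lemma hf0d (x : ℝ) : HasDerivAt f0' (-Real.cos (x + π / 2)) x := by
  have h1 : HasDerivAt (fun x : ℝ => x + π / 2) 1 x := (hasDerivAt_id x).add_const _
  exact ((h1.sin.neg).add_const (2 / π)).congr_deriv (by simp)

lemma hf0'c : Continuous f0' := by
  unfold f0'; fun_prop

/-- Exact second-variation identity for Example 4: perturbing the
Euler–Lagrange solution `y₀` by an admissible `h` changes the functional by
exactly `∫ h′²`. -/
theorem example4_second_variation
    (h : ℝ → ℝ) (hh : ContDiffOn ℝ 1 h (Set.Icc (-(π / 2)) (π / 2)))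
    (hb1 : h (-(π / 2)) = 0) (hb2 : h (π / 2) = 0) :
    (∫ x in (-(π / 2))..(π / 2),
        ((deriv ((fun x : ℝ => Real.cos (x + π / 2) + (2 / π) * x) + h) x) ^ 2 -
          2 * ((fun x : ℝ => Real.cos (x + π / 2) + (2 / π) * x) + h) x *
            Real.cos (x + π / 2))) -
      (∫ x in (-(π / 2))..(π / 2),
        ((deriv (fun x : ℝ => Real.cos (x + π / 2) + (2 / π) * x) x) ^ 2 -
          2 * (fun x : ℝ => Real.cos (x + π / 2) + (2 / π) * x) x *
            Real.cos (x + π / 2))) =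
      ∫ x in (-(π / 2))..(π / 2), (deriv h x) ^ 2 := by
  have hπ : (0:ℝ) < π := Real.pi_pos
  have hab : -(π/2) ≤ π/2 := by linarith
  have hlt : -(π/2) < π/2 := by linarith
  set K : Set ℝ := Set.Icc (-(π/2)) (π/2) with hK
  set φ : ℝ → ℝ := fun x => derivWithin h K x with hφ
  have hφc : ContinuousOn φ K := hh.continuousOn_derivWithin (uniqueDiffOn_Icc hlt) le_rfl
  have hhc : ContinuousOn h K := hh.continuousOn
  have hhd : ∀ x ∈ Set.Ioo (-(π/2)) (π/2), HasDerivAt h (φ x) x := by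
    intro x hx
    have hmem : K ∈ nhds x := Icc_mem_nhds hx.1 hx.2
    exact (((hh.differentiableOn one_ne_zero) x (Set.Ioo_subset_Icc_self hx)).hasDerivWithinAt).hasDerivAt hmem
  have haeIoo : ∀ᵐ x : ℝ, x ∈ Set.uIoc (-(π/2)) (π/2) → x ∈ Set.Ioo (-(π/2)) (π/2) := by
    have hb : ∀ᵐ x : ℝ, x ≠ π/2 := by
      refine MeasureTheory.ae_iff.2 ?_
      have : {x : ℝ | ¬ x ≠ π/2} = {π/2} := by ext y; simp
      rw [this]; exact Real.volume_singleton
    filter_upwards [hb] with x hx hmem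
    rw [Set.uIoc_of_le hab] at hmem
    exact ⟨hmem.1, lt_of_le_of_ne hmem.2 hx⟩
  have huIcc : Set.uIcc (-(π/2)) (π/2) = K := Set.uIcc_of_le hab
  -- continuous auxiliary integrands
  have hcC : Continuous (fun x : ℝ => Real.cos (x + π/2)) := by fun_prop
  have hf0c : Continuous f0 := by unfold f0; fun_prop
  -- integrability facts
  have hiF1 : IntervalIntegrable
      (fun x => (f0' x + φ x)^2 - 2 * (f0 x + h x) * Real.cos (x + π/2))
      MeasureTheory.volume (-(π/2)) (π/2) := by
    apply ContinuousOn.intervalIntegrable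
    rw [huIcc]
    exact ((hf0'c.continuousOn.add hφc).pow 2).sub
      ((continuousOn_const.mul (hf0c.continuousOn.add hhc)).mul hcC.continuousOn)
  have hiF2 : IntervalIntegrable
      (fun x => f0' x ^ 2 - 2 * f0 x * Real.cos (x + π/2))
      MeasureTheory.volume (-(π/2)) (π/2) := by
    apply ContinuousOn.intervalIntegrable
    rw [huIcc]
    exact ((hf0'c.continuousOn.pow 2)).sub
      ((continuousOn_const.mul hf0c.continuousOn).mul hcC.continuousOn)
  have hiφ2 : IntervalIntegrable (fun x => φ x ^ 2) MeasureTheory.volume (-(π/2)) (π/2) := by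
    apply ContinuousOn.intervalIntegrable
    rw [huIcc]
    exact hφc.pow 2
  have hicross : IntervalIntegrable
      (fun x => 2 * (f0' x * φ x - Real.cos (x + π/2) * h x))
      MeasureTheory.volume (-(π/2)) (π/2) := by
    apply ContinuousOn.intervalIntegrable
    rw [huIcc]
    exact continuousOn_const.mul ((hf0'c.continuousOn.mul hφc).sub (hcC.continuousOn.mul hhc))
  -- step 1: rewrite first integral
  have h1 : (∫ x in (-(π/2))..(π/2),
        ((deriv (f0 + h) x) ^ 2 - 2 * (f0 + h) x * Real.cos (x + π/2)))
      = ∫ x in (-(π/2))..(π/2),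
        ((f0' x + φ x)^2 - 2 * (f0 x + h x) * Real.cos (x + π/2)) := by
    refine intervalIntegral.integral_congr_ae ?_
    filter_upwards [haeIoo] with x hx hmem
    have hx' := hx hmem
    have hd : HasDerivAt (f0 + h) (f0' x + φ x) x := (hf0 x).add (hhd x hx')
    simp only [hd.deriv, Pi.add_apply]
  -- step 2: rewrite second integral
  have h2 : (∫ x in (-(π/2))..(π/2),
        ((deriv f0 x) ^ 2 - 2 * f0 x * Real.cos (x + π/2)))
      = ∫ x in (-(π/2))..(π/2), (f0' x ^ 2 - 2 * f0 x * Real.cos (x + π/2)) := by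
    apply intervalIntegral.integral_congr
    intro x _
    simp only [(hf0 x).deriv]
  -- step 3: rewrite RHS
  have h3 : (∫ x in (-(π/2))..(π/2), (deriv h x) ^ 2)
      = ∫ x in (-(π/2))..(π/2), φ x ^ 2 := by
    refine intervalIntegral.integral_congr_ae ?_
    filter_upwards [haeIoo] with x hx hmem
    simp only [(hhd x (hx hmem)).deriv]
  -- FTC: the cross term vanishes
  have hFTC : (∫ x in (-(π/2))..(π/2),
      (2 * (f0' x * φ x - Real.cos (x + π/2) * h x))) = 0 := by
    have key : ∀ x ∈ Set.Ioo (-(π/2)) (π/2),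
        HasDerivAt (fun y => 2 * (f0' y * h y))
          (2 * (f0' x * φ x - Real.cos (x + π/2) * h x)) x := by
      intro x hx
      have := ((hf0d x).mul (hhd x hx)).const_mul 2
      exact this.congr_deriv (by ring)
    have hcont : ContinuousOn (fun y => 2 * (f0' y * h y)) K :=
      continuousOn_const.mul (hf0'c.continuousOn.mul hhc)
    have := intervalIntegral.integral_eq_sub_of_hasDeriv_right_of_le hab hcont
      (fun x hx => (key x hx).hasDerivWithinAt) hicross
    rw [this, hb1, hb2]
    ring
  show (∫ x in (-(π/2))..(π/2),
        ((deriv (f0 + h) x) ^ 2 - 2 * (f0 + h) x * Real.cos (x + π/2)))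
      - (∫ x in (-(π/2))..(π/2),
        ((deriv f0 x) ^ 2 - 2 * f0 x * Real.cos (x + π/2)))
      = ∫ x in (-(π/2))..(π/2), (deriv h x) ^ 2
  rw [h1, h2, h3, ← intervalIntegral.integral_sub hiF1 hiF2]
  have h4 : (∫ x in (-(π/2))..(π/2),
      (((f0' x + φ x)^2 - 2 * (f0 x + h x) * Real.cos (x + π/2))
        - (f0' x ^ 2 - 2 * f0 x * Real.cos (x + π/2))))
      = ∫ x in (-(π/2))..(π/2),
        (φ x ^ 2 + 2 * (f0' x * φ x - Real.cos (x + π/2) * h x)) := by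
    apply intervalIntegral.integral_congr
    intro x _
    ring
  rw [h4, intervalIntegral.integral_add hiφ2 hicross, hFTC, add_zero]
end

section
/- For every continuously differentiable function y : ℝ → ℝ on [−π/2, π/2] with y(−π/2) = 0 and y(π/2) = 0, one has ∫_{−π/2}^{π/2} ((y′(x))² − 2·y(x)·cos(x + π/2)) dx ≥ 4/π − π/2. -/
open Real intervalIntegral

/-- Example 4 lower bound: any C¹ competitor with zero boundary values at
`±π/2` gives functional value at least `4/π - π/2`. -/
theorem example4_lower_bound
    (y : ℝ → ℝ) (hy : ContDiffOn ℝ 1 y (Set.Icc (-(π / 2)) (π / 2)))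
    (hb1 : y (-(π / 2)) = 0) (hb2 : y (π / 2) = 0) :
    ∫ x in (-(π / 2))..(π / 2),
      ((deriv y x) ^ 2 - 2 * y x * Real.cos (x + π / 2)) ≥ 4 / π - π / 2 := by
  have hπ : (0:ℝ) < π := Real.pi_pos
  set a : ℝ := -(π / 2) with ha
  set b : ℝ := π / 2 with hb
  have hab : a ≤ b := by
    rw [ha, hb]; linarith
  have huIcc : Set.uIcc a b = Set.Icc a b := Set.uIcc_of_le hab
  have hud : UniqueDiffOn ℝ (Set.Icc a b) := uniqueDiffOn_Icc (by rw [ha, hb]; linarith)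
  set f : ℝ → ℝ := derivWithin y (Set.Icc a b) with hf
  have hfc : ContinuousOn f (Set.Icc a b) :=
    hy.continuousOn_derivWithin hud le_rfl
  have hyc : ContinuousOn y (Set.Icc a b) := hy.continuousOn
  -- g = minimizer derivative, φ = exact derivative term
  set g : ℝ → ℝ := fun x => 2 / π - Real.cos x with hg
  set φ : ℝ → ℝ := fun x => 2 * Real.sin x * y x + 2 * g x * f x with hφ
  have hgc : Continuous g := by continuity
  -- differentiability and deriv = f on the interior
  have hdiff : ∀ x ∈ Set.Ioo a b, DifferentiableAt ℝ y x ∧ deriv y x = f x := by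
    intro x hx
    have hmem : Set.Icc a b ∈ nhds x := Icc_mem_nhds hx.1 hx.2
    have hd : DifferentiableWithinAt ℝ y (Set.Icc a b) x :=
      (hy.differentiableOn one_ne_zero) x (Set.Ioo_subset_Icc_self hx)
    have hda : DifferentiableAt ℝ y x := hd.differentiableAt hmem
    exact ⟨hda, (derivWithin_of_mem_nhds hmem).symm⟩
  -- replace deriv y by f in the integral (a.e. equality on Ι a b)
  have hstep1 : ∫ x in a..b, ((deriv y x) ^ 2 - 2 * y x * Real.cos (x + π / 2))
      = ∫ x in a..b, ((f x) ^ 2 - 2 * y x * Real.cos (x + π / 2)) := by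
    apply intervalIntegral.integral_congr_ae
    have hne : ∀ᵐ x : ℝ, x ≠ b := by
      refine MeasureTheory.ae_iff.2 ?_
      simpa only [ne_eq, not_not, Set.setOf_eq_eq_singleton] using MeasureTheory.measure_singleton (μ := MeasureTheory.volume) b
    filter_upwards [hne] with x hxb hx
    rw [Set.uIoc_of_le hab] at hx
    have hxo : x ∈ Set.Ioo a b := ⟨hx.1, lt_of_le_of_ne hx.2 hxb⟩
    rw [(hdiff x hxo).2]
  -- pointwise identity
  have hpt : ∀ x : ℝ, (f x) ^ 2 - 2 * y x * Real.cos (x + π / 2)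
      = (f x - g x) ^ 2 + φ x - (g x) ^ 2 := by
    intro x
    rw [Real.cos_add_pi_div_two]
    simp only [hφ, hg]
    ring
  -- integrability facts
  have hint1 : IntervalIntegrable (fun x => (f x - g x) ^ 2) MeasureTheory.volume a b := by
    apply ContinuousOn.intervalIntegrable
    rw [huIcc]
    exact ((hfc.sub hgc.continuousOn).pow 2)
  have hintφ : IntervalIntegrable φ MeasureTheory.volume a b := by
    apply ContinuousOn.intervalIntegrable
    rw [huIcc]
    exact ((continuous_const.mul Real.continuous_sin).continuousOn.mul hyc).add
      ((continuous_const.mul hgc).continuousOn.mul hfc)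
  have hint2 : IntervalIntegrable (fun x => (g x) ^ 2) MeasureTheory.volume a b :=
    ((hgc.pow 2).continuousOn).intervalIntegrable
  -- FTC: ∫ φ = 0
  have hFTC : ∫ x in a..b, φ x = 0 := by
    have hF : ∀ x ∈ Set.Ioo a b, HasDerivAt (fun x => 2 * g x * y x) (φ x) x := by
      intro x hx
      obtain ⟨hda, hdx⟩ := hdiff x hx
      have h1 : HasDerivAt (fun x => 2 * g x) (2 * Real.sin x) x := by
        have : HasDerivAt (fun x : ℝ => 2 * (2 / π - Real.cos x))
            (2 * (0 - (-Real.sin x))) x :=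
          ((hasDerivAt_const x (2 / π : ℝ)).sub (Real.hasDerivAt_cos x)).const_mul 2
        simpa [hg] using this
      have h2 : HasDerivAt y (f x) x := hdx ▸ hda.hasDerivAt
      have := h1.mul h2
      exact this
    have hcF : ContinuousOn (fun x => 2 * g x * y x) (Set.Icc a b) :=
      ((continuous_const.mul hgc).continuousOn).mul hyc
    rw [intervalIntegral.integral_eq_sub_of_hasDerivAt_of_le hab hcF hF hintφ]
    simp [hb1, hb2]
  -- ∫ g² = π/2 - 4/π
  have hgsq : ∫ x in a..b, (g x) ^ 2 = π / 2 - 4 / π := by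
    have hexp : ∀ x : ℝ, (g x) ^ 2
        = (2 / π) ^ 2 - (4 / π) * Real.cos x + (Real.cos x) ^ 2 := by
      intro x; simp only [hg]; ring
    rw [intervalIntegral.integral_congr (fun x _ => hexp x)]
    have i1 : IntervalIntegrable (fun _ : ℝ => (2 / π) ^ 2) MeasureTheory.volume a b :=
      intervalIntegrable_const
    have i2 : IntervalIntegrable (fun x => (4 / π) * Real.cos x) MeasureTheory.volume a b :=
      (intervalIntegrable_cos.const_mul _)
    have i3 : IntervalIntegrable (fun x => (Real.cos x) ^ 2) MeasureTheory.volume a b :=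
      ((Real.continuous_cos.pow 2).continuousOn).intervalIntegrable
    rw [intervalIntegral.integral_add (i1.sub i2) i3, intervalIntegral.integral_sub i1 i2,
      intervalIntegral.integral_const, intervalIntegral.integral_const_mul,
      integral_cos, integral_cos_sq]
    rw [ha, hb]
    simp [Real.sin_pi_div_two, Real.cos_pi_div_two]
    field_simp
    ring
  -- put everything together
  rw [hstep1, intervalIntegral.integral_congr (fun x _ => hpt x),
    intervalIntegral.integral_sub (hint1.add hintφ) hint2,
    intervalIntegral.integral_add hint1 hintφ, hFTC, hgsq]
  have hnn : 0 ≤ ∫ x in a..b, (f x - g x) ^ 2 :=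
    intervalIntegral.integral_nonneg hab (fun x _ => sq_nonneg _)
  linarith
end

section
/- Let h : ℝ → ℝ be continuously differentiable on [0, 1] with h(0) = 0 and h(1) = 0. Then ∫_0^1 ((h′(x))² − (h(x))²) dx ≥ 0. -/
open intervalIntegral

/-- Poincaré-type inequality on `[0, 1]`: for C¹ functions vanishing at the
endpoints, `∫_0^1 (h′² - h²) dx ≥ 0`. -/
theorem poincare_type_inequality
    (h : ℝ → ℝ) (hh : ContDiffOn ℝ 1 h (Set.Icc 0 1))
    (h0 : h 0 = 0) (h1 : h 1 = 0) :
    ∫ x in (0 : ℝ)..1, ((deriv h x) ^ 2 - (h x) ^ 2) ≥ 0 := by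
  set g : ℝ → ℝ := fun x => Real.cos (x + 1) / Real.sin (x + 1) with hg_def
  set f : ℝ → ℝ := fun x => derivWithin h (Set.Icc (0:ℝ) 1) x with hf_def
  have hud : UniqueDiffOn ℝ (Set.Icc (0:ℝ) 1) := uniqueDiffOn_Icc (by norm_num)
  have hsin : ∀ x ∈ Set.Icc (0:ℝ) 1, Real.sin (x + 1) ≠ 0 := by
    intro x hx
    have h1 : (0:ℝ) < x + 1 := by linarith [hx.1]
    have h2 : x + 1 < Real.pi := by linarith [hx.2, Real.pi_gt_three]
    exact ne_of_gt (Real.sin_pos_of_pos_of_lt_pi h1 h2)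
  have hg_cont : ContinuousOn g (Set.Icc 0 1) := by
    apply ContinuousOn.div
    · exact (Real.continuous_cos.comp (continuous_id.add continuous_const)).continuousOn
    · exact (Real.continuous_sin.comp (continuous_id.add continuous_const)).continuousOn
    · exact hsin
  have hh_cont : ContinuousOn h (Set.Icc 0 1) := hh.continuousOn
  have hf_cont : ContinuousOn f (Set.Icc 0 1) :=
    hh.continuousOn_derivWithin hud le_rfl
  -- deriv h = f on Ioo
  have hIoo_nhds : ∀ x ∈ Set.Ioo (0:ℝ) 1, Set.Icc (0:ℝ) 1 ∈ nhds x := by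
    intro x hx
    exact Filter.mem_of_superset (isOpen_Ioo.mem_nhds hx) Set.Ioo_subset_Icc_self
  have hfd : ∀ x ∈ Set.Ioo (0:ℝ) 1, f x = deriv h x := by
    intro x hx
    exact derivWithin_of_mem_nhds (hIoo_nhds x hx)
  have hhd : ∀ x ∈ Set.Ioo (0:ℝ) 1, HasDerivAt h (f x) x := by
    intro x hx
    have hd : DifferentiableAt ℝ h x :=
      ((hh.differentiableOn one_ne_zero) x (Set.Ioo_subset_Icc_self hx)).differentiableAt
        (hIoo_nhds x hx)
    rw [hfd x hx]
    exact hd.hasDerivAt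
  -- derivative of g
  have hgd : ∀ x ∈ Set.Ioo (0:ℝ) 1, HasDerivAt g (-(1 + g x ^ 2)) x := by
    intro x hx
    have hxI : x ∈ Set.Icc (0:ℝ) 1 := Set.Ioo_subset_Icc_self hx
    have hs := hsin x hxI
    have hc : HasDerivAt (fun y : ℝ => Real.cos (y + 1)) (-Real.sin (x + 1)) x := by
      have := (Real.hasDerivAt_cos (x + 1)).comp x
        ((hasDerivAt_id x).add_const 1)
      simpa [Function.comp_def] using this
    have hs' : HasDerivAt (fun y : ℝ => Real.sin (y + 1)) (Real.cos (x + 1)) x := by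
      have := (Real.hasDerivAt_sin (x + 1)).comp x
        ((hasDerivAt_id x).add_const 1)
      simpa [Function.comp_def] using this
    have hdiv : HasDerivAt (fun y : ℝ => Real.cos (y + 1) / Real.sin (y + 1)) _ x := hc.div hs' hs
    convert hdiv using 1
    have hpyth := Real.sin_sq_add_cos_sq (x + 1)
    simp only [hg_def]
    field_simp
    nlinarith [hpyth]
  -- FTC for φ = g * h^2
  set φ' : ℝ → ℝ := fun x => -(1 + g x ^ 2) * h x ^ 2 + g x * (2 * h x * f x) with hφ'_def
  have hφ'_cont : ContinuousOn φ' (Set.Icc 0 1) := by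
    apply ContinuousOn.add
    · exact ((continuousOn_const.add (hg_cont.pow 2)).neg).mul (hh_cont.pow 2)
    · exact hg_cont.mul ((continuousOn_const.mul hh_cont).mul hf_cont)
  have hφ_cont : ContinuousOn (fun x => g x * h x ^ 2) (Set.Icc 0 1) :=
    hg_cont.mul (hh_cont.pow 2)
  have hφderiv : ∀ x ∈ Set.Ioo (0:ℝ) 1,
      HasDerivWithinAt (fun x => g x * h x ^ 2) (φ' x) (Set.Ioi x) x := by
    intro x hx
    have hhx := hhd x hx
    have hgx := hgd x hx
    have h2 : HasDerivAt (fun y => h y ^ 2) (2 * h x * f x) x := by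
      have := hhx.pow 2
      exact this.congr_deriv (by norm_num)
    have := hgx.mul h2
    exact this.hasDerivWithinAt
  have hint_φ' : IntervalIntegrable φ' MeasureTheory.volume 0 1 :=
    (by rwa [Set.uIcc_of_le zero_le_one] : ContinuousOn φ' (Set.uIcc 0 1)).intervalIntegrable
  have hFTC : ∫ x in (0:ℝ)..1, φ' x = g 1 * h 1 ^ 2 - g 0 * h 0 ^ 2 :=
    intervalIntegral.integral_eq_sub_of_hasDeriv_right_of_le zero_le_one
      hφ_cont hφderiv hint_φ'
  have hFTC0 : ∫ x in (0:ℝ)..1, φ' x = 0 := by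
    rw [hFTC, h0, h1]; ring
  -- square term
  set q : ℝ → ℝ := fun x => (f x - g x * h x) ^ 2 with hq_def
  have hq_cont : ContinuousOn q (Set.Icc 0 1) :=
    ((hf_cont.sub (hg_cont.mul hh_cont)).pow 2)
  have hint_q : IntervalIntegrable q MeasureTheory.volume 0 1 :=
    (by rwa [Set.uIcc_of_le zero_le_one] : ContinuousOn q (Set.uIcc 0 1)).intervalIntegrable
  have hq_nonneg : (0:ℝ) ≤ ∫ x in (0:ℝ)..1, q x :=
    intervalIntegral.integral_nonneg zero_le_one (fun x _ => sq_nonneg _)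
  -- replace deriv h by f a.e.
  have hae : ∫ x in (0:ℝ)..1, ((deriv h x) ^ 2 - (h x) ^ 2)
      = ∫ x in (0:ℝ)..1, (f x ^ 2 - h x ^ 2) := by
    apply intervalIntegral.integral_congr_ae
    have h1ae : ∀ᵐ (x : ℝ), x ≠ 1 := by
      have : MeasureTheory.volume ({(1:ℝ)} : Set ℝ) = 0 := MeasureTheory.measure_singleton 1
      rw [MeasureTheory.ae_iff]
      simpa [Set.setOf_eq_eq_singleton'] using this
    filter_upwards [h1ae] with x hx1 hxI
    rw [Set.uIoc_of_le zero_le_one] at hxI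
    have hxIoo : x ∈ Set.Ioo (0:ℝ) 1 := ⟨hxI.1, lt_of_le_of_ne hxI.2 hx1⟩
    rw [hfd x hxIoo]
  rw [hae]
  have hsplit : ∫ x in (0:ℝ)..1, (f x ^ 2 - h x ^ 2)
      = (∫ x in (0:ℝ)..1, q x) + ∫ x in (0:ℝ)..1, φ' x := by
    rw [← intervalIntegral.integral_add hint_q hint_φ']
    apply intervalIntegral.integral_congr
    intro x hx
    simp only [hq_def, hφ'_def]
    ring
  rw [hsplit, hFTC0, add_zero]
  exact hq_nonneg
end

section
/- Let y₀(x) = sin(x)/sin(1) − x and let h : ℝ → ℝ be continuously differentiable on [0, 1] with h(0) = h(1) = 0. Then ∫_0^1 (((y₀ + h)′(x))² − ((y₀ + h)(x))² − 2·x·(y₀ + h)(x)) dx − ∫_0^1 ((y₀′(x))² − (y₀(x))² − 2·x·y₀(x)) dx = ∫_0^1 ((h′(x))² − (h(x))²) dx. -/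
open Real intervalIntegral MeasureTheory Set

/-- Exact quadratic-expansion identity for Example 5: perturbing the
Euler–Lagrange solution `y₀(x) = sin x / sin 1 - x` by an admissible `h`
changes the functional by exactly `∫ (h′² - h²)`. -/
theorem example5_quadratic_expansion
    (h : ℝ → ℝ) (hh : ContDiffOn ℝ 1 h (Set.Icc 0 1))
    (hb0 : h 0 = 0) (hb1 : h 1 = 0) :
    (∫ x in (0 : ℝ)..1,
        ((deriv ((fun x : ℝ => Real.sin x / Real.sin 1 - x) + h) x) ^ 2 -
          (((fun x : ℝ => Real.sin x / Real.sin 1 - x) + h) x) ^ 2 -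
          2 * x * ((fun x : ℝ => Real.sin x / Real.sin 1 - x) + h) x)) -
      (∫ x in (0 : ℝ)..1,
        ((deriv (fun x : ℝ => Real.sin x / Real.sin 1 - x) x) ^ 2 -
          ((fun x : ℝ => Real.sin x / Real.sin 1 - x) x) ^ 2 -
          2 * x * (fun x : ℝ => Real.sin x / Real.sin 1 - x) x)) =
      ∫ x in (0 : ℝ)..1, ((deriv h x) ^ 2 - (h x) ^ 2) := by
  -- notation
  set g : ℝ → ℝ := fun x => derivWithin h (Set.Icc 0 1) x with hg
  have hy0d : ∀ x : ℝ, HasDerivAt (fun x : ℝ => Real.sin x / Real.sin 1 - x)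
      (Real.cos x / Real.sin 1 - 1) x := fun x =>
    ((Real.hasDerivAt_sin x).div_const _).sub (hasDerivAt_id x)
  have hud : ∀ x : ℝ, HasDerivAt (fun x : ℝ => Real.cos x / Real.sin 1 - 1)
      (-(Real.sin x / Real.sin 1)) x := fun x => by
    simpa [neg_div] using ((Real.hasDerivAt_cos x).div_const (Real.sin 1)).sub_const 1
  have hgc : ContinuousOn g (Set.Icc 0 1) :=
    hh.continuousOn_derivWithin (uniqueDiffOn_Icc zero_lt_one) le_rfl
  have hder : ∀ x ∈ Set.Ioo (0:ℝ) 1, HasDerivAt h (g x) x := fun x hx =>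
    ((hh.differentiableOn one_ne_zero x (Set.Ioo_subset_Icc_self hx)).hasDerivWithinAt).hasDerivAt
      (Icc_mem_nhds hx.1 hx.2)
  have huIcc : Set.uIcc (0:ℝ) 1 = Set.Icc 0 1 := Set.uIcc_of_le zero_le_one
  have hhc : ContinuousOn h (Set.Icc 0 1) := hh.continuousOn
  -- integration by parts
  have hIbp : (∫ x in (0:ℝ)..1, (Real.cos x / Real.sin 1 - 1) * g x)
      = ∫ x in (0:ℝ)..1, (Real.sin x / Real.sin 1) * h x := by
    have hu' : IntervalIntegrable (fun x : ℝ => -(Real.sin x / Real.sin 1)) volume 0 1 :=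
      (by fun_prop : Continuous fun x : ℝ => -(Real.sin x / Real.sin 1)).intervalIntegrable 0 1
    have hv' : IntervalIntegrable g volume 0 1 := by
      apply ContinuousOn.intervalIntegrable; rwa [huIcc]
    have := intervalIntegral.integral_mul_deriv_eq_deriv_mul_of_hasDerivAt (a := (0:ℝ)) (b := 1)
      (u := fun x : ℝ => Real.cos x / Real.sin 1 - 1) (v := h)
      (u' := fun x : ℝ => -(Real.sin x / Real.sin 1)) (v' := g)
      (by fun_prop) (by rwa [huIcc])
      (by intro x hx; exact hud x)
      (by intro x hx; exact hder x (by simpa using hx)) hu' hv'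
    rw [this, hb0, hb1]
    simp only [mul_zero, sub_zero, zero_sub, neg_mul]
    rw [intervalIntegral.integral_neg]
    ring
  -- pointwise integrands
  set Q : ℝ → ℝ := fun x => (Real.cos x / Real.sin 1 - 1) ^ 2
      - (Real.sin x / Real.sin 1 - x) ^ 2 - 2 * x * (Real.sin x / Real.sin 1 - x) with hQ
  set R : ℝ → ℝ := fun x => (g x) ^ 2 - (h x) ^ 2 with hR
  set C : ℝ → ℝ := fun x => 2 * ((Real.cos x / Real.sin 1 - 1) * g x)
      - 2 * ((Real.sin x / Real.sin 1) * h x) with hC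
  -- integrability on Ioo
  have hint : ∀ f : ℝ → ℝ, ContinuousOn f (Set.Icc 0 1) → IntegrableOn f (Set.Ioo (0:ℝ) 1) :=
    fun f hf => (hf.integrableOn_compact isCompact_Icc).mono_set Set.Ioo_subset_Icc_self
  have hQint : IntegrableOn Q (Set.Ioo (0:ℝ) 1) := hint Q (by fun_prop)
  have hRint : IntegrableOn R (Set.Ioo (0:ℝ) 1) := by
    apply hint
    exact ((hgc.pow 2).sub ((hhc.pow 2)))
  have hCint : IntegrableOn C (Set.Ioo (0:ℝ) 1) := by
    apply hint
    apply ContinuousOn.sub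
    · exact (continuousOn_const.mul (((by fun_prop : Continuous fun x : ℝ =>
        Real.cos x / Real.sin 1 - 1).continuousOn).mul hgc))
    · fun_prop
  -- rewrite the three interval integrals as Ioo-set integrals
  have conv : ∀ f : ℝ → ℝ, (∫ x in (0:ℝ)..1, f x) = ∫ x in Set.Ioo (0:ℝ) 1, f x := by
    intro f
    rw [intervalIntegral.integral_of_le zero_le_one, MeasureTheory.integral_Ioc_eq_integral_Ioo]
  have e1 : (∫ x in (0 : ℝ)..1,
        ((deriv ((fun x : ℝ => Real.sin x / Real.sin 1 - x) + h) x) ^ 2 -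
          (((fun x : ℝ => Real.sin x / Real.sin 1 - x) + h) x) ^ 2 -
          2 * x * ((fun x : ℝ => Real.sin x / Real.sin 1 - x) + h) x))
      = ∫ x in Set.Ioo (0:ℝ) 1, (Q x + R x + C x) := by
    rw [conv]
    refine setIntegral_congr_fun measurableSet_Ioo fun x hx => ?_
    have hsum : HasDerivAt ((fun x : ℝ => Real.sin x / Real.sin 1 - x) + h)
        ((Real.cos x / Real.sin 1 - 1) + g x) x := (hy0d x).add (hder x hx)
    rw [hsum.deriv]
    simp only [Pi.add_apply, hQ, hR, hC]
    ring
  have e2 : (∫ x in (0 : ℝ)..1,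
        ((deriv (fun x : ℝ => Real.sin x / Real.sin 1 - x) x) ^ 2 -
          ((fun x : ℝ => Real.sin x / Real.sin 1 - x) x) ^ 2 -
          2 * x * (fun x : ℝ => Real.sin x / Real.sin 1 - x) x))
      = ∫ x in Set.Ioo (0:ℝ) 1, Q x := by
    rw [conv]
    refine setIntegral_congr_fun measurableSet_Ioo fun x hx => ?_
    rw [(hy0d x).deriv]
  have e3 : (∫ x in (0 : ℝ)..1, ((deriv h x) ^ 2 - (h x) ^ 2))
      = ∫ x in Set.Ioo (0:ℝ) 1, R x := by
    rw [conv]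
    refine setIntegral_congr_fun measurableSet_Ioo fun x hx => ?_
    rw [hR]
    rw [(hder x hx).deriv]
  -- cross term vanishes
  have hC0 : (∫ x in Set.Ioo (0:ℝ) 1, C x) = 0 := by
    have h1 : IntegrableOn (fun x : ℝ => 2 * ((Real.cos x / Real.sin 1 - 1) * g x))
        (Set.Ioo (0:ℝ) 1) := by
      apply hint
      exact continuousOn_const.mul (((by fun_prop : Continuous fun x : ℝ =>
        Real.cos x / Real.sin 1 - 1).continuousOn).mul hgc)
    have h2 : IntegrableOn (fun x : ℝ => 2 * ((Real.sin x / Real.sin 1) * h x))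
        (Set.Ioo (0:ℝ) 1) := by apply hint; fun_prop
    rw [hC]
    rw [MeasureTheory.integral_sub h1 h2, MeasureTheory.integral_const_mul,
      MeasureTheory.integral_const_mul, ← conv, ← conv, hIbp]
    ring
  have s1 := MeasureTheory.integral_add (μ := volume.restrict (Set.Ioo (0:ℝ) 1))
    (hQint.add hRint) hCint
  have s2 := MeasureTheory.integral_add (μ := volume.restrict (Set.Ioo (0:ℝ) 1)) hQint hRint
  simp only [Pi.add_apply] at s1 s2
  rw [e1, e2, e3, s1, s2, hC0]
  ring
end

section
/- For every continuously differentiable function y : ℝ → ℝ on [0, 1] with y(0) = 0 and y(1) = 0, one has ∫_0^1 ((y′(x))² − (y(x))² − 2·x·y(x)) dx ≥ cot(1) − 2/3, where cot(1) = cos(1)/sin(1). -/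
open Real intervalIntegral

namespace Example5Aux

noncomputable def ys (x : ℝ) : ℝ := Real.sin x / Real.sin 1 - x
noncomputable def ysd (x : ℝ) : ℝ := Real.cos x / Real.sin 1 - 1
noncomputable def tt (x : ℝ) : ℝ := Real.tan (1/2 - x)

lemma cos_ne {x : ℝ} (hx : x ∈ Set.Icc (0:ℝ) 1) : Real.cos (1/2 - x) ≠ 0 := by
  have hπ := Real.pi_gt_three
  apply ne_of_gt
  apply Real.cos_pos_of_mem_Ioo
  constructor
  · simp only [Set.mem_Icc] at hx; nlinarith [hx.1, hx.2]
  · simp only [Set.mem_Icc] at hx; nlinarith [hx.1, hx.2]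

lemma tt_contAt {x : ℝ} (hx : x ∈ Set.Icc (0:ℝ) 1) : ContinuousAt tt x := by
  have h1 : ContinuousAt Real.tan (1/2 - x) := Real.continuousAt_tan.2 (cos_ne hx)
  exact h1.comp ((continuous_const.sub continuous_id).continuousAt)

lemma hasDerivAt_tt {x : ℝ} (hx : x ∈ Set.Icc (0:ℝ) 1) :
    HasDerivAt tt (-(1 + tt x ^ 2)) x := by
  have h1 : HasDerivAt Real.tan (1 / Real.cos (1/2 - x) ^ 2) (1/2 - x) :=
    Real.hasDerivAt_tan (cos_ne hx)
  have h2 : HasDerivAt (fun x : ℝ => 1/2 - x) (-1) x := by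
    have h := (hasDerivAt_id x).const_sub (1/2 : ℝ)
    simpa using h
  have h3 := h1.comp x h2
  have hc := cos_ne hx
  have hpy := Real.sin_sq_add_cos_sq (1/2 - x)
  refine h3.congr_deriv ?_
  simp only [tt, Real.tan_eq_sin_div_cos]
  set a := Real.sin (1/2 - x) with ha
  set b := Real.cos (1/2 - x) with hb
  field_simp
  linarith [hpy]

lemma hasDerivAt_ys (x : ℝ) : HasDerivAt ys (ysd x) x := by
  have h1 : HasDerivAt (fun x : ℝ => Real.sin x / Real.sin 1) (Real.cos x / Real.sin 1) x :=
    (Real.hasDerivAt_sin x).div_const _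
  exact h1.sub (hasDerivAt_id' x)

lemma ys_cont : Continuous ys := by
  unfold ys; continuity

lemma ysd_cont : Continuous ysd := by
  unfold ysd; continuity

end Example5Aux

open Example5Aux MeasureTheory Set in
/-- Example 5 lower bound: any C¹ competitor with `y(0) = y(1) = 0` gives
functional value at least `cot 1 - 2/3`. -/
theorem example5_lower_bound
    (y : ℝ → ℝ) (hy : ContDiffOn ℝ 1 y (Set.Icc 0 1))
    (h0 : y 0 = 0) (h1 : y 1 = 0) :
    ∫ x in (0 : ℝ)..1,
      ((deriv y x) ^ 2 - (y x) ^ 2 - 2 * x * y x) ≥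
      Real.cos 1 / Real.sin 1 - 2 / 3 := by
  have hπ := Real.pi_gt_three
  have hs : (0:ℝ) < Real.sin 1 := Real.sin_pos_of_pos_of_lt_pi one_pos (by linarith)
  have hs' : Real.sin 1 ≠ 0 := ne_of_gt hs
  set g : ℝ → ℝ := fun x => derivWithin y (Set.Icc 0 1) x with hg_def
  set h : ℝ → ℝ := fun x => y x - ys x with hh_def
  set F : ℝ → ℝ := fun x => g x ^ 2 - y x ^ 2 - 2 * x * y x with hF_def
  set Q : ℝ → ℝ := fun x => (g x - ysd x - tt x * h x) ^ 2 with hQ_def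
  set Φ : ℝ → ℝ := fun x =>
    Real.sin (2*x) / (2 * Real.sin 1 ^ 2) - 2 * Real.sin x / Real.sin 1 + x + x^3/3
      + 2 * ysd x * h x + tt x * h x ^ 2 with hΦ_def
  have hy_cont : ContinuousOn y (Set.Icc 0 1) := hy.continuousOn
  have hg_cont : ContinuousOn g (Set.Icc 0 1) :=
    hy.continuousOn_derivWithin (uniqueDiffOn_Icc one_pos) le_rfl
  have hh_cont : ContinuousOn h (Set.Icc 0 1) := hy_cont.sub ys_cont.continuousOn
  -- HasDerivAt y (g x) x on the interior
  have hyderiv : ∀ x ∈ Set.Ioo (0:ℝ) 1, HasDerivAt y (g x) x := by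
    intro x hx
    have hmem : Set.Icc (0:ℝ) 1 ∈ nhds x := Icc_mem_nhds hx.1 hx.2
    have hd : DifferentiableAt ℝ y x :=
      (hy.differentiableOn one_ne_zero x (Set.Ioo_subset_Icc_self hx)).differentiableAt hmem
    have : g x = deriv y x := derivWithin_of_mem_nhds hmem
    rw [this]
    exact hd.hasDerivAt
  -- replace deriv by g in the integral
  have hint_eq : (∫ x in (0:ℝ)..1, ((deriv y x) ^ 2 - (y x) ^ 2 - 2 * x * y x))
      = ∫ x in (0:ℝ)..1, F x := by
    apply intervalIntegral.integral_congr_ae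
    have h1ae : ∀ᵐ (x:ℝ), x ≠ 1 := by
      rw [MeasureTheory.ae_iff]
      simp only [not_not]
      have : {x : ℝ | x = 1} = {1} := rfl
      rw [this]
      exact Real.volume_singleton
    filter_upwards [h1ae] with x hne hxmem
    rw [Set.uIoc_of_le (by norm_num : (0:ℝ) ≤ 1)] at hxmem
    have hxIoo : x ∈ Set.Ioo (0:ℝ) 1 := ⟨hxmem.1, lt_of_le_of_ne hxmem.2 hne⟩
    have hmem : Set.Icc (0:ℝ) 1 ∈ nhds x := Icc_mem_nhds hxIoo.1 hxIoo.2
    have : g x = deriv y x := derivWithin_of_mem_nhds hmem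
    simp only [hF_def, this]
  rw [hint_eq]
  -- continuity of the pieces
  have htt_cont : ContinuousOn tt (Set.Icc 0 1) := fun x hx => (tt_contAt hx).continuousWithinAt
  have hF_cont : ContinuousOn F (Set.Icc 0 1) := by
    apply ContinuousOn.sub
    apply ContinuousOn.sub
    · exact hg_cont.pow 2
    · exact hy_cont.pow 2
    · exact (continuousOn_const.mul continuousOn_id).mul hy_cont
  have hQ_cont : ContinuousOn Q (Set.Icc 0 1) := by
    apply ContinuousOn.pow
    exact (hg_cont.sub ysd_cont.continuousOn).sub (htt_cont.mul hh_cont)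
  have hΦ_cont : ContinuousOn Φ (Set.Icc 0 1) := by
    refine ((((ContinuousOn.sub ?_ ?_).add ?_).add ?_).add ?_).add ?_
    · exact ((Real.continuous_sin.comp (continuous_const.mul continuous_id)).continuousOn).div_const _
    · exact ((continuous_const.mul Real.continuous_sin).continuousOn).div_const _
    · exact continuousOn_id
    · exact (continuousOn_id.pow 3).div_const _
    · exact (continuousOn_const.mul ysd_cont.continuousOn).mul hh_cont
    · exact htt_cont.mul (hh_cont.pow 2)
  have huIcc : Set.uIcc (0:ℝ) 1 = Set.Icc 0 1 := Set.uIcc_of_le (by norm_num)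
  have hintFQ : IntervalIntegrable (fun x => F x - Q x) MeasureTheory.volume 0 1 :=
    ContinuousOn.intervalIntegrable (by rw [huIcc]; exact hF_cont.sub hQ_cont)
  have hintQ : IntervalIntegrable Q MeasureTheory.volume 0 1 :=
    ContinuousOn.intervalIntegrable (by rw [huIcc]; exact hQ_cont)
  -- FTC: ∫ (F - Q) = Φ 1 - Φ 0
  have hFTC : (∫ x in (0:ℝ)..1, (F x - Q x)) = Φ 1 - Φ 0 := by
    apply intervalIntegral.integral_eq_sub_of_hasDeriv_right_of_le (by norm_num) hΦ_cont
    · intro x hx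
      have hxIcc : x ∈ Set.Icc (0:ℝ) 1 := Set.Ioo_subset_Icc_self hx
      -- build derivative of Φ
      have hdy : HasDerivAt y (g x) x := hyderiv x hx
      have hdh : HasDerivAt h (g x - ysd x) x := hdy.sub (hasDerivAt_ys x)
      have hd1 : HasDerivAt (fun x => Real.sin (2*x) / (2 * Real.sin 1 ^ 2))
          (Real.cos (2*x) * 2 / (2 * Real.sin 1 ^ 2)) x := by
        have h := ((Real.hasDerivAt_sin (2*x)).comp x
          ((hasDerivAt_id x).const_mul 2)).div_const (2 * Real.sin 1 ^ 2)
        simpa [Function.comp] using h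
      have hd2 : HasDerivAt (fun x => 2 * Real.sin x / Real.sin 1)
          (2 * Real.cos x / Real.sin 1) x :=
        (((Real.hasDerivAt_sin x).const_mul 2)).div_const _
      have hd3 : HasDerivAt (fun x : ℝ => x) 1 x := hasDerivAt_id x
      have hd4 : HasDerivAt (fun x : ℝ => x^3/3) (3 * x^2 / 3) x := by
        have : HasDerivAt (fun x : ℝ => x^3) (3 * x^2) x := by
          simpa using hasDerivAt_pow 3 x
        exact this.div_const _
      have hdysd : HasDerivAt ysd (-Real.sin x / Real.sin 1) x := by
        have : HasDerivAt (fun x => Real.cos x / Real.sin 1) (-Real.sin x / Real.sin 1) x :=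
          (Real.hasDerivAt_cos x).div_const _
        exact this.sub_const 1
      have hd5 : HasDerivAt (fun x => 2 * ysd x * h x)
          ((2 * (-Real.sin x / Real.sin 1)) * h x + (2 * ysd x) * (g x - ysd x)) x :=
        (hdysd.const_mul 2).mul hdh
      have hdtt := hasDerivAt_tt hxIcc
      have hd6 : HasDerivAt (fun x => tt x * h x ^ 2)
          ((-(1 + tt x ^ 2)) * h x ^ 2 + tt x * (2 * h x * (g x - ysd x))) x := by
        have hh2 : HasDerivAt (fun x => h x ^ 2) (2 * h x * (g x - ysd x)) x := by
          have := hdh.pow 2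
          simp [mul_comm, mul_assoc, mul_left_comm] at this ⊢; exact this
        exact hdtt.mul hh2
      have hD : HasDerivAt Φ
          (Real.cos (2*x) * 2 / (2 * Real.sin 1 ^ 2) - 2 * Real.cos x / Real.sin 1 + 1
            + 3 * x^2 / 3
            + ((2 * (-Real.sin x / Real.sin 1)) * h x + (2 * ysd x) * (g x - ysd x))
            + ((-(1 + tt x ^ 2)) * h x ^ 2 + tt x * (2 * h x * (g x - ysd x)))) x :=
        ((((hd1.sub hd2).add hd3).add hd4).add hd5).add hd6
      have hkey : F x - Q x
          = Real.cos (2*x) * 2 / (2 * Real.sin 1 ^ 2) - 2 * Real.cos x / Real.sin 1 + 1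
            + 3 * x^2 / 3
            + ((2 * (-Real.sin x / Real.sin 1)) * h x + (2 * ysd x) * (g x - ysd x))
            + ((-(1 + tt x ^ 2)) * h x ^ 2 + tt x * (2 * h x * (g x - ysd x))) := by
        have hpy := Real.sin_sq_add_cos_sq x
        simp only [hF_def, hQ_def, hh_def, ys, ysd, Real.cos_two_mul]
        linear_combination (-(1:ℝ) / Real.sin 1 ^ 2) * hpy
      rw [hkey]
      exact hD.hasDerivWithinAt
    · exact hintFQ
  -- combine
  have hsplit : (∫ x in (0:ℝ)..1, F x)
      = (∫ x in (0:ℝ)..1, Q x) + ∫ x in (0:ℝ)..1, (F x - Q x) := by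
    rw [← intervalIntegral.integral_add hintQ hintFQ]
    congr 1; ext x; ring
  have hQnn : (0:ℝ) ≤ ∫ x in (0:ℝ)..1, Q x :=
    intervalIntegral.integral_nonneg (by norm_num) (fun u _ => sq_nonneg _)
  have hΦval : Φ 1 - Φ 0 = Real.cos 1 / Real.sin 1 - 2/3 := by
    have hh1 : h 1 = 0 := by simp [hh_def, ys, h1, div_self hs']
    have hh0 : h 0 = 0 := by simp [hh_def, ys, h0]
    have hsin2 : Real.sin (2*1) = 2 * Real.sin 1 * Real.cos 1 := Real.sin_two_mul 1
    simp only [hΦ_def, hh1, hh0]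
    rw [hsin2]
    norm_num
    field_simp
    ring
  rw [hsplit, hFTC, hΦval]
  linarith
end
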